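/- Let 𝓗 be a pseudogroup of local transformations of a locally compact space Z, and let E be a recurrent finite symmetric family of generators of 𝓗 witnessed by a relatively compact open set U and radius R > 0. If V ⊆ Z is any open set that meets every 𝓗-orbit, then there exists S > 0 such that every d_E-ball of radius S in any 𝓗-orbit meets V. -/

import Mathlib

open Topology Filter Set

/-- A pseudogroup of local transformations of a topological space. -/
structure IsPseudogroup {Z : Type*} [TopologicalSpace Z]
    (H : Set (OpenPartialHomeomorph Z Z)) : Prop where
  id_mem : OpenPartialHomeomorph.refl Z ∈ H
  trans_mem : ∀ h ∈ H, ∀ g ∈ H, h.trans g ∈ H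
  symm_mem : ∀ h ∈ H, h.symm ∈ H
  restr_mem : ∀ h ∈ H, ∀ s : Set Z, IsOpen s → h.restr s ∈ H

/-- The orbit of a point under a pseudogroup. -/
def pgOrbit {Z : Type*} [TopologicalSpace Z]
    (H : Set (OpenPartialHomeomorph Z Z)) (x : Z) : Set Z :=
  {y | ∃ h ∈ H, x ∈ h.source ∧ h x = y}

/- The word length `|h|_{E,x}` of `h` at `x ∈ dom h` with respect to a set of
generators `E`: zero if `h` is the identity near `x`, and otherwise the least
`k` such that, on a neighborhood of `x`, `h` agrees with a composite of `k`
elements of `E`. -/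
open Classical in
noncomputable def wordLen {Z : Type*} [TopologicalSpace Z]
    (E : Set (OpenPartialHomeomorph Z Z)) (h : OpenPartialHomeomorph Z Z) (x : Z) : ℕ∞ :=
  if ∀ᶠ y in 𝓝 x, h y = y then 0
  else sInf {n : ℕ∞ | ∃ l : List (OpenPartialHomeomorph Z Z), l ≠ [] ∧ (∀ g ∈ l, g ∈ E) ∧
      n = (l.length : ℕ∞) ∧
      x ∈ (l.foldl OpenPartialHomeomorph.trans (OpenPartialHomeomorph.refl Z)).source ∧
      ∀ᶠ y in 𝓝 x, (l.foldl OpenPartialHomeomorph.trans (OpenPartialHomeomorph.refl Z)) y = h y}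

/-- The metric `d_E` on orbits induced by a symmetric set of generators `E`. -/
noncomputable def dE {Z : Type*} [TopologicalSpace Z]
    (H E : Set (OpenPartialHomeomorph Z Z)) (x y : Z) : ℕ∞ :=
  sInf {n : ℕ∞ | ∃ h ∈ H, x ∈ h.source ∧ h x = y ∧ wordLen E h x = n}

section Aux

variable {Z : Type*} [TopologicalSpace Z]

theorem myFoldl_trans_eq (l : List (OpenPartialHomeomorph Z Z)) (A : OpenPartialHomeomorph Z Z) :
    l.foldl OpenPartialHomeomorph.trans A
      = A.trans (l.foldl OpenPartialHomeomorph.trans (OpenPartialHomeomorph.refl Z)) := by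
  induction l generalizing A with
  | nil => simp [OpenPartialHomeomorph.trans_refl]
  | cons b l ih =>
      simp only [List.foldl_cons]
      rw [ih (A.trans b), ih ((OpenPartialHomeomorph.refl Z).trans b),
        OpenPartialHomeomorph.refl_trans, OpenPartialHomeomorph.trans_assoc]

theorem myWordLen_eq_zero {E : Set (OpenPartialHomeomorph Z Z)} {h : OpenPartialHomeomorph Z Z} {x : Z}
    (hz : ∀ᶠ y in 𝓝 x, h y = y) : wordLen E h x = 0 := by
  unfold wordLen
  rw [if_pos hz]

theorem myWordLen_le_of_list {E : Set (OpenPartialHomeomorph Z Z)} {h : OpenPartialHomeomorph Z Z} {x : Z}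
    {l : List (OpenPartialHomeomorph Z Z)} (hne : l ≠ []) (hl : ∀ g ∈ l, g ∈ E)
    (hsrc : x ∈ (l.foldl OpenPartialHomeomorph.trans (OpenPartialHomeomorph.refl Z)).source)
    (heq : ∀ᶠ y in 𝓝 x, (l.foldl OpenPartialHomeomorph.trans (OpenPartialHomeomorph.refl Z)) y = h y) :
    wordLen E h x ≤ (l.length : ℕ∞) := by
  unfold wordLen
  split_ifs with hc
  · exact zero_le
  · exact sInf_le ⟨l, hne, hl, rfl, hsrc, heq⟩

theorem myWordLen_congr {E : Set (OpenPartialHomeomorph Z Z)} {h₁ h₂ : OpenPartialHomeomorph Z Z} {x : Z}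
    (he : ∀ᶠ y in 𝓝 x, h₁ y = h₂ y) : wordLen E h₁ x = wordLen E h₂ x := by
  unfold wordLen
  have h1 : (∀ᶠ y in 𝓝 x, h₁ y = y) ↔ (∀ᶠ y in 𝓝 x, h₂ y = y) :=
    eventually_congr (he.mono fun y hy => by rw [hy])
  have h2 : {n : ℕ∞ | ∃ l : List (OpenPartialHomeomorph Z Z), l ≠ [] ∧ (∀ g ∈ l, g ∈ E) ∧
      n = (l.length : ℕ∞) ∧
      x ∈ (l.foldl OpenPartialHomeomorph.trans (OpenPartialHomeomorph.refl Z)).source ∧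
      ∀ᶠ y in 𝓝 x, (l.foldl OpenPartialHomeomorph.trans (OpenPartialHomeomorph.refl Z)) y = h₁ y}
      = {n : ℕ∞ | ∃ l : List (OpenPartialHomeomorph Z Z), l ≠ [] ∧ (∀ g ∈ l, g ∈ E) ∧
      n = (l.length : ℕ∞) ∧
      x ∈ (l.foldl OpenPartialHomeomorph.trans (OpenPartialHomeomorph.refl Z)).source ∧
      ∀ᶠ y in 𝓝 x, (l.foldl OpenPartialHomeomorph.trans (OpenPartialHomeomorph.refl Z)) y = h₂ y} := by
    ext n
    constructor
    · rintro ⟨l, a, b, c, d, e⟩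
      exact ⟨l, a, b, c, d, e.mp (he.mono fun y hy hl => hl.trans hy)⟩
    · rintro ⟨l, a, b, c, d, e⟩
      exact ⟨l, a, b, c, d, e.mp (he.mono fun y hy hl => hl.trans hy.symm)⟩
  rw [h2]
  by_cases hc : ∀ᶠ y in 𝓝 x, h₂ y = y
  · rw [if_pos (h1.mpr hc), if_pos hc]
  · rw [if_neg (fun hh => hc (h1.mp hh)), if_neg hc]

theorem myWordLen_exists_list {E : Set (OpenPartialHomeomorph Z Z)} {h : OpenPartialHomeomorph Z Z} {x : Z}
    (hnid : ¬ ∀ᶠ y in 𝓝 x, h y = y) (hfin : wordLen E h x ≠ ⊤) :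
    ∃ l : List (OpenPartialHomeomorph Z Z), l ≠ [] ∧ (∀ g ∈ l, g ∈ E) ∧
      (l.length : ℕ∞) = wordLen E h x ∧
      x ∈ (l.foldl OpenPartialHomeomorph.trans (OpenPartialHomeomorph.refl Z)).source ∧
      ∀ᶠ y in 𝓝 x, (l.foldl OpenPartialHomeomorph.trans (OpenPartialHomeomorph.refl Z)) y = h y := by
  classical
  unfold wordLen at hfin ⊢
  rw [if_neg hnid] at hfin ⊢
  set s : Set ℕ∞ := {n : ℕ∞ | ∃ l : List (OpenPartialHomeomorph Z Z), l ≠ [] ∧ (∀ g ∈ l, g ∈ E) ∧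
      n = (l.length : ℕ∞) ∧
      x ∈ (l.foldl OpenPartialHomeomorph.trans (OpenPartialHomeomorph.refl Z)).source ∧
      ∀ᶠ y in 𝓝 x, (l.foldl OpenPartialHomeomorph.trans (OpenPartialHomeomorph.refl Z)) y = h y} with hs
  have hsne : s.Nonempty := by
    rw [Set.nonempty_iff_ne_empty]
    intro he
    rw [he, sInf_empty] at hfin
    exact hfin rfl
  obtain ⟨l, a, b, c, d, e⟩ := csInf_mem hsne
  exact ⟨l, a, b, c.symm, d, e⟩

theorem myWordLen_trans_le (E : Set (OpenPartialHomeomorph Z Z)) {h g : OpenPartialHomeomorph Z Z} {x : Z}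
    (hx : x ∈ h.source) (hfh : wordLen E h x ≠ ⊤) (hfg : wordLen E g (h x) ≠ ⊤) :
    wordLen E (h.trans g) x ≤ wordLen E h x + wordLen E g (h x) := by
  by_cases hc₁ : ∀ᶠ y in 𝓝 x, h y = y
  · -- h is the identity near x
    have hxx : h x = x := hc₁.self_of_nhds
    have heq : ∀ᶠ y in 𝓝 x, (h.trans g) y = g y :=
      hc₁.mono fun y hy => by simp [OpenPartialHomeomorph.coe_trans, hy]
    rw [myWordLen_congr heq, myWordLen_eq_zero hc₁, zero_add, hxx]
  by_cases hc₂ : ∀ᶠ y in 𝓝 (h x), g y = y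
  · -- g is the identity near h x
    have hev : ∀ᶠ y in 𝓝 x, g (h y) = h y := (h.continuousAt hx).eventually hc₂
    have heq : ∀ᶠ y in 𝓝 x, (h.trans g) y = h y :=
      hev.mono fun y hy => by simp [OpenPartialHomeomorph.coe_trans, hy]
    rw [myWordLen_congr heq]
    exact le_self_add
  -- both nontrivial: use lists
  obtain ⟨l₁, hne₁, hE₁, hlen₁, hsrc₁, heq₁⟩ := myWordLen_exists_list hc₁ hfh
  obtain ⟨l₂, hne₂, hE₂, hlen₂, hsrc₂, heq₂⟩ := myWordLen_exists_list hc₂ hfg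
  set F₁ := l₁.foldl OpenPartialHomeomorph.trans (OpenPartialHomeomorph.refl Z) with hF₁
  set F₂ := l₂.foldl OpenPartialHomeomorph.trans (OpenPartialHomeomorph.refl Z) with hF₂
  have hF : (l₁ ++ l₂).foldl OpenPartialHomeomorph.trans (OpenPartialHomeomorph.refl Z)
      = F₁.trans F₂ := by
    rw [List.foldl_append, ← hF₁, myFoldl_trans_eq l₂ F₁, ← hF₂]
  have hF₁x : F₁ x = h x := heq₁.self_of_nhds
  have hsrc : x ∈ ((l₁ ++ l₂).foldl OpenPartialHomeomorph.trans
      (OpenPartialHomeomorph.refl Z)).source := by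
    rw [hF, OpenPartialHomeomorph.trans_source]
    exact ⟨hsrc₁, by simp [hF₁x, hsrc₂]⟩
  have hev₂ : ∀ᶠ y in 𝓝 x, F₂ (h y) = g (h y) := (h.continuousAt hx).eventually heq₂
  have heq : ∀ᶠ y in 𝓝 x, ((l₁ ++ l₂).foldl OpenPartialHomeomorph.trans
      (OpenPartialHomeomorph.refl Z)) y = (h.trans g) y := by
    filter_upwards [heq₁, hev₂] with y hy₁ hy₂
    rw [hF]
    simp only [OpenPartialHomeomorph.coe_trans, Function.comp_apply]
    rw [hy₁, hy₂]
  have := myWordLen_le_of_list (E := E) (h := h.trans g) (x := x)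
    (l := l₁ ++ l₂) (by simp [hne₁]) (by
      intro a ha
      rcases List.mem_append.mp ha with h' | h'
      · exact hE₁ a h'
      · exact hE₂ a h') hsrc heq
  calc wordLen E (h.trans g) x ≤ ((l₁ ++ l₂).length : ℕ∞) := this
    _ = (l₁.length : ℕ∞) + (l₂.length : ℕ∞) := by
        rw [List.length_append]; push_cast; ring
    _ = wordLen E h x + wordLen E g (h x) := by rw [hlen₁, hlen₂]

theorem myWordLen_locally_le {E : Set (OpenPartialHomeomorph Z Z)} {h : OpenPartialHomeomorph Z Z} {x : Z}
    (hfin : wordLen E h x ≠ ⊤) :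
    ∀ᶠ z in 𝓝 x, wordLen E h z ≤ wordLen E h x := by
  by_cases hc : ∀ᶠ y in 𝓝 x, h y = y
  · filter_upwards [eventually_eventually_nhds.mpr hc] with z hz
    rw [myWordLen_eq_zero hz]
    exact zero_le
  · obtain ⟨l, hne, hE, hlen, hsrc, heq⟩ := myWordLen_exists_list hc hfin
    filter_upwards [eventually_eventually_nhds.mpr heq,
      (l.foldl OpenPartialHomeomorph.trans (OpenPartialHomeomorph.refl Z)).open_source.mem_nhds hsrc]
      with z hz hzsrc
    calc wordLen E h z ≤ (l.length : ℕ∞) := myWordLen_le_of_list hne hE hzsrc hz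
      _ = wordLen E h x := hlen

theorem myDE_le {H E : Set (OpenPartialHomeomorph Z Z)} {h : OpenPartialHomeomorph Z Z} {x y : Z}
    (hh : h ∈ H) (hx : x ∈ h.source) (hxy : h x = y) :
    dE H E x y ≤ wordLen E h x := sInf_le ⟨h, hh, hx, hxy, rfl⟩

end Aux

/-- If `E` is a recurrent finite symmetric family of generators of a pseudogroup
`𝓗` of local transformations of a locally compact space, witnessed by a
relatively compact open set `U` and radius `R > 0`, then for every open set `V`
meeting all `𝓗`-orbits there is `S > 0` such that every `d_E`-ball of radius
`S` in any orbit meets `V`. -/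
theorem recurrent_generators_reach_any_open_set_meeting_orbits
    {Z : Type*} [TopologicalSpace Z] [LocallyCompactSpace Z]
    (H E : Set (OpenPartialHomeomorph Z Z)) (hH : IsPseudogroup H)
    (hEH : E ⊆ H) (hEfin : E.Finite) (hEsymm : ∀ g ∈ E, g.symm ∈ E)
    (hEgen : ∀ h ∈ H, ∀ x ∈ h.source, wordLen E h x ≠ ⊤)
    (U : Set Z) (hUopen : IsOpen U) (hUcpt : IsCompact (closure U))
    (R : ℕ) (hRpos : 0 < R)
    (hrec : ∀ x : Z, ∃ y ∈ U, dE H E x y < (R : ℕ∞))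
    (V : Set Z) (hVopen : IsOpen V)
    (hV : ∀ x : Z, ∃ y ∈ V, y ∈ pgOrbit H x) :
    ∃ S : ℕ, 0 < S ∧ ∀ x : Z, ∃ y ∈ V, dE H E x y < (S : ℕ∞) := by
  classical
  -- Step 1: at every point there is a local uniform bound for reaching V
  have key : ∀ z : Z, ∃ n : ℕ, ∀ᶠ z' in 𝓝 z, ∃ v ∈ V, dE H E z' v < ((n + 1 : ℕ) : ℕ∞) := by
    intro z
    obtain ⟨y, hyV, h, hhH, hzsrc, hzy⟩ := hV z
    have hfin := hEgen h hhH z hzsrc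
    obtain ⟨n, hn⟩ : ∃ n : ℕ, wordLen E h z = (n : ℕ∞) := by
      lift wordLen E h z to ℕ using hfin with n
      exact ⟨n, rfl⟩
    refine ⟨n, ?_⟩
    have h1 := myWordLen_locally_le hfin
    have h2 : ∀ᶠ z' in 𝓝 z, z' ∈ h.source := h.open_source.mem_nhds hzsrc
    have h3 : ∀ᶠ z' in 𝓝 z, h z' ∈ V :=
      (h.continuousAt hzsrc).eventually_mem (hVopen.mem_nhds (hzy ▸ hyV))
    filter_upwards [h1, h2, h3] with z' hw hs hv
    refine ⟨h z', hv, ?_⟩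
    calc dE H E z' (h z') ≤ wordLen E h z' := myDE_le hhH hs rfl
      _ ≤ wordLen E h z := hw
      _ = (n : ℕ∞) := hn
      _ < ((n + 1 : ℕ) : ℕ∞) := by exact_mod_cast Nat.lt_succ_self n
  choose n hn using key
  -- Step 2: finite subcover of closure U
  obtain ⟨t, _, htcov⟩ := hUcpt.elim_nhds_subcover
    (fun z => {z' | ∃ v ∈ V, dE H E z' v < ((n z + 1 : ℕ) : ℕ∞)}) (fun z _ => hn z)
  set M := t.sup n with hM
  -- Step 3: assemble
  refine ⟨R + (M + 1), by positivity, ?_⟩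
  intro x
  obtain ⟨u, huU, hxu⟩ := hrec x
  have hu' : u ∈ closure U := subset_closure huU
  obtain ⟨z, hzt, hz⟩ : ∃ z ∈ t, ∃ v ∈ V, dE H E u v < ((n z + 1 : ℕ) : ℕ∞) := by
    have := htcov hu'
    simpa using this
  obtain ⟨v, hvV, huv⟩ := hz
  -- extract witnesses
  obtain ⟨a, ⟨h, hhH, hxsrc, hhx, hwa⟩, haR⟩ := sInf_lt_iff.mp hxu
  obtain ⟨b, ⟨g, hgH, husrc, hgu, hwb⟩, hbN⟩ := sInf_lt_iff.mp huv
  have hfH : h.trans g ∈ H := hH.trans_mem h hhH g hgH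
  have hxs : x ∈ (h.trans g).source := by
    rw [OpenPartialHomeomorph.trans_source]
    exact ⟨hxsrc, by simp [hhx, husrc]⟩
  have hfx : (h.trans g) x = v := by
    simp [OpenPartialHomeomorph.coe_trans, hhx, hgu]
  have hfa : wordLen E h x ≠ ⊤ := by rw [hwa]; exact ne_top_of_lt haR
  have hfb : wordLen E g (h x) ≠ ⊤ := by rw [hhx, hwb]; exact ne_top_of_lt hbN
  have hle : dE H E x v ≤ wordLen E h x + wordLen E g (h x) :=
    (myDE_le hfH hxs hfx).trans (myWordLen_trans_le E hxsrc hfa hfb)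
  refine ⟨v, hvV, lt_of_le_of_lt hle ?_⟩
  rw [hhx, hwa, hwb]
  have hb' : b < ((M + 1 : ℕ) : ℕ∞) := by
    refine lt_of_lt_of_le hbN ?_
    exact_mod_cast Nat.succ_le_succ (Finset.le_sup hzt)
  -- a + b < R + (M+1)
  have ha' : a ≠ ⊤ := ne_top_of_lt haR
  have hb'' : b ≠ ⊤ := ne_top_of_lt hbN
  lift a to ℕ using ha'
  lift b to ℕ using hb''
  have h1 : a < R := by exact_mod_cast haR
  have h2 : b < M + 1 := by exact_mod_cast hb'
  exact_mod_cast Nat.add_lt_add h1 h2
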